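/- For the rescaled Kaufmann-Scully vortex with vorticity $W_\epsilon(r) = 2/(1+\epsilon r^2)^2$ and angular velocity $\Omega_\epsilon(r) = 1/(1+\epsilon r^2)$, let $m, k$ be real with $m \ne 0$, and suppose $0 < \epsilon \le 4k^2/m^2$. Then the Richardson number $\mathrm{Ri}_\epsilon(r) = (k^2/m^2)\,\Phi_\epsilon(r)/\Omega_\epsilon'(r)^2$, where $\Phi_\epsilon = 2\Omega_\epsilon W_\epsilon$, satisfies $\mathrm{Ri}_\epsilon(r) \ge 1/4$ for all $r > 0$. -/

import Mathlib

theorem rescaled_kaufmann_scully_richardson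
    (m k ε : ℝ) (hm : m ≠ 0) (hε : 0 < ε) (hε4 : ε ≤ 4 * k^2 / m^2)
    (Ωε Wε Φε : ℝ → ℝ)
    (hΩ : ∀ r, Ωε r = 1 / (1 + ε * r^2))
    (hW : ∀ r, Wε r = 2 / (1 + ε * r^2)^2)
    (hΦ : ∀ r, Φε r = 2 * Ωε r * Wε r) :
    ∀ r > (0:ℝ), (1:ℝ)/4 ≤ (k^2 / m^2) * Φε r / (deriv Ωε r)^2 := by
  intro r hr
  have hden : (0:ℝ) < 1 + ε * r^2 := by positivity
  have h1 : HasDerivAt (fun s : ℝ => 1 + ε * s^2) (2*ε*r) r := by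
    have := ((hasDerivAt_pow 2 r).const_mul ε).const_add 1
    simpa [mul_comm, mul_assoc, mul_left_comm] using this
  have hderiv : HasDerivAt Ωε (-(2*ε*r) / (1 + ε*r^2)^2) r := by
    have h2 := (hasDerivAt_const r (1:ℝ)).div h1 hden.ne'
    have heq : (fun s : ℝ => 1 / (1 + ε * s^2)) = Ωε := by
      funext s; rw [hΩ s]
    rw [← heq]
    exact h2.congr_deriv (by ring)
  have hd : deriv Ωε r = -(2*ε*r) / (1 + ε*r^2)^2 := hderiv.deriv
  rw [hd, hΦ, hΩ, hW]
  have hm2 : (0:ℝ) < m^2 := by positivity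
  have hk : m^2 * ε ≤ 4 * k^2 := by
    rw [le_div_iff₀ hm2] at hε4; linarith
  have hr2 : (0:ℝ) < r^2 := by positivity
  have hA : k^2 / m^2 * (2 * (1 / (1 + ε * r ^ 2)) * (2 / (1 + ε * r ^ 2) ^ 2)) /
      (-(2 * ε * r) / (1 + ε * r ^ 2) ^ 2) ^ 2
      = (k^2 * (1 + ε * r^2)) / (m^2 * (ε^2 * r^2)) := by
    field_simp
  rw [hA, le_div_iff₀ (by positivity)]
  nlinarith [mul_le_mul_of_nonneg_right hk (mul_pos hε hr2).le, sq_nonneg k]
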